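/- arXiv:1602.07667 — 2 statements merged into one kernel-verified Lean document; each statement's English description precedes it below -/
import Mathlib

section
/- Let κ be a regular infinite cardinal and suppose a two-step reachability game is less than κ-branching, i.e., for every state q and every verifier move a ∈ M(q), the set of possible outcome states { o(q,a,b) | b a response } has cardinality < κ. Then every state that has a rank has rank strictly less than κ, and hence W(κ) = W(κ+1), i.e., the iteration is stable at κ. -/
/-- A two-step reachability game: states `S`, for each state a nonempty type
of verifier moves, for each move a nonempty type of falsifier responses,
an outcome function `o`, and a target set `T`. -/
structure Game where
  S : Type
  M : S → Type
  M_ne : ∀ q, Nonempty (M q)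
  B : (q : S) → M q → Type
  B_ne : ∀ q a, Nonempty (B q a)
  o : (q : S) → (a : M q) → B q a → S
  T : Set S

/-- The one-step verifier operator `F(X) = T ∪ { q | ∃ a ∈ M(q), ∀ b, o(q,a,b) ∈ X }`. -/
def Game.step (G : Game) (X : Set G.S) : Set G.S :=
  G.T ∪ { q | ∃ a : G.M q, ∀ b : G.B q a, G.o q a b ∈ X }

/-- The winning-region iteration: `W 0 = T`, `W (γ+1) = step (W γ)`,
and `W λ = ⋃_{γ<λ} W γ` for limit `λ`. -/
noncomputable def Game.W (G : Game) (γ : Ordinal.{0}) : Set G.S :=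
  Ordinal.limitRecOn γ G.T (fun _ X => G.step X)
    (fun δ _ ih => ⋃ x : { β : Ordinal.{0} // β < δ }, ih x.1 x.2)

/-- The rank of a state: the least ordinal `γ` with `q ∈ W γ`
(meaningful when such an ordinal exists). -/
noncomputable def Game.rank (G : Game) (q : G.S) : Ordinal.{0} :=
  sInf { γ | q ∈ G.W γ }

lemma Game.W_zero (G : Game) : G.W 0 = G.T := Ordinal.limitRecOn_zero ..

lemma Game.W_succ (G : Game) (γ : Ordinal.{0}) : G.W (γ + 1) = G.step (G.W γ) :=
  Ordinal.limitRecOn_succ ..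

lemma Game.W_limit (G : Game) {δ : Ordinal.{0}} (h : Order.IsSuccLimit δ) :
    G.W δ = ⋃ x : { β : Ordinal.{0} // β < δ }, G.W x.1 :=
  Ordinal.limitRecOn_limit _ _ _ _ h

lemma Game.step_mono (G : Game) {X Y : Set G.S} (h : X ⊆ Y) : G.step X ⊆ G.step Y := by
  rintro q (hq | ⟨a, ha⟩)
  · exact Or.inl hq
  · exact Or.inr ⟨a, fun b => h (ha b)⟩

lemma Game.W_succ_self (G : Game) (β : Ordinal.{0}) : G.W β ⊆ G.W (β + 1) := by
  induction β using Ordinal.induction with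
  | _ β ih =>
    rcases Ordinal.zero_or_succ_or_isSuccLimit β with h0 | ⟨α, rfl⟩ | hl
    · subst h0
      rw [G.W_zero, G.W_succ, G.W_zero]
      exact Set.subset_union_left
    · rw [← Ordinal.add_one_eq_succ, G.W_succ (α+1), G.W_succ α]
      exact G.step_mono (by rw [← G.W_succ α]; exact ih α (Order.lt_succ α))
    · intro q hq
      rw [G.W_limit hl] at hq
      obtain ⟨_, ⟨⟨γ, hγ⟩, rfl⟩, hqγ⟩ := hq
      have h1 : q ∈ G.W (γ + 1) := ih γ hγ hqγ
      rw [G.W_succ] at h1 ⊢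
      refine G.step_mono ?_ h1
      intro x hx
      rw [G.W_limit hl]
      exact Set.mem_iUnion.2 ⟨⟨γ, hγ⟩, hx⟩

lemma Game.W_mono (G : Game) {γ δ : Ordinal.{0}} (h : γ ≤ δ) : G.W γ ⊆ G.W δ := by
  induction δ using Ordinal.induction with
  | _ δ ih =>
    rcases eq_or_lt_of_le h with rfl | hlt
    · exact le_refl _
    rcases Ordinal.zero_or_succ_or_isSuccLimit δ with h0 | ⟨α, rfl⟩ | hl
    · subst h0; exact absurd hlt (not_lt_zero (a := γ))
    · exact (ih α (Order.lt_succ α) (Order.lt_succ_iff.1 hlt)).trans (G.W_succ_self α)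
    · intro q hq
      rw [G.W_limit hl]
      exact Set.mem_iUnion.2 ⟨⟨γ, hlt⟩, hq⟩

/-- If `κ` is a regular infinite cardinal and the game is less than
`κ`-branching, then every state having a rank has rank `< κ`, and the
iteration is stable at `κ`: `W κ = W (κ+1)`. -/
theorem regular_branching_stable (G : Game) (κ : Cardinal.{0})
    (hκ : κ.IsRegular)
    (hbr : ∀ (q : G.S) (a : G.M q), Cardinal.mk (Set.range (G.o q a)) < κ) :
    (∀ q : G.S, (∃ δ, q ∈ G.W δ) → G.rank q < κ.ord) ∧
    G.W κ.ord = G.W (κ.ord + 1) := by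
  have hlim : Order.IsSuccLimit κ.ord := Cardinal.isSuccLimit_ord hκ.aleph0_le
  -- key: anything in some W δ is in some W γ with γ < κ.ord
  have key : ∀ δ : Ordinal.{0}, ∀ q ∈ G.W δ, ∃ γ < κ.ord, q ∈ G.W γ := by
    intro δ
    induction δ using Ordinal.induction with
    | _ δ ih =>
      intro q hq
      rcases Ordinal.zero_or_succ_or_isSuccLimit δ with h0 | ⟨α, rfl⟩ | hl
      · exact ⟨δ, h0 ▸ hlim.pos, hq⟩
      · rw [← Ordinal.add_one_eq_succ, G.W_succ] at hq
        rcases hq with hT | ⟨a, ha⟩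
        · exact ⟨0, hlim.pos, by rw [G.W_zero]; exact hT⟩
        · -- choose ranks for outcomes
          have hx : ∀ x : Set.range (G.o q a), ∃ γ, γ < κ.ord ∧ (x : G.S) ∈ G.W γ := by
            rintro ⟨x, b, rfl⟩
            obtain ⟨γ, hγ, hγ'⟩ := ih α (Order.lt_succ α) _ (ha b)
            exact ⟨γ, hγ, hγ'⟩
          choose f hf1 hf2 using hx
          have hsup : iSup f < κ.ord :=
            Cardinal.iSup_lt_ord_of_isRegular hκ (hbr q a) hf1
          refine ⟨iSup f + 1, hlim.succ_lt hsup, ?_⟩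
          rw [G.W_succ]
          refine Or.inr ⟨a, fun b => ?_⟩
          exact G.W_mono (Ordinal.le_iSup f ⟨_, b, rfl⟩) (hf2 ⟨_, b, rfl⟩)
      · rw [G.W_limit hl] at hq
        obtain ⟨_, ⟨⟨γ, hγ⟩, rfl⟩, hqγ⟩ := hq
        exact ih γ hγ q hqγ
  constructor
  · rintro q ⟨δ, hδ⟩
    obtain ⟨γ, hγ, hqγ⟩ := key δ q hδ
    exact lt_of_le_of_lt (csInf_le' hqγ) hγ
  · apply Set.Subset.antisymm (G.W_succ_self _)
    intro q hq
    rw [G.W_succ] at hq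
    rcases hq with hT | ⟨a, ha⟩
    · exact G.W_mono zero_le (by rw [G.W_zero]; exact hT)
    · have hx : ∀ x : Set.range (G.o q a), ∃ γ, γ < κ.ord ∧ (x : G.S) ∈ G.W γ := by
        rintro ⟨x, b, rfl⟩
        exact key κ.ord _ (ha b)
      choose f hf1 hf2 using hx
      have hsup : iSup f < κ.ord :=
        Cardinal.iSup_lt_ord_of_isRegular hκ (hbr q a) hf1
      have : q ∈ G.W (iSup f + 1) := by
        rw [G.W_succ]
        exact Or.inr ⟨a, fun b =>
          G.W_mono (Ordinal.le_iSup f ⟨_, b, rfl⟩) (hf2 ⟨_, b, rfl⟩)⟩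
      exact G.W_mono (Order.succ_le_of_lt hsup) this
end

section
/- König-type lemma for safety: in an image-finite two-step reachability game, if for every natural number n the falsifier can keep the play outside T for n steps from state q (i.e., q ∈ V(n) for all n < ω), then the falsifier can keep the play outside T forever: there is an infinite sequence of states q = q0, q1, q2, … with each qk ∉ T and each q(k+1) an outcome of some verifier move and falsifier response at qk, such that this holds against every verifier move choice (formally: q ∈ V(γ) for every ordinal γ). -/
/-- The one-step falsifier operator `X ↦ Tᶜ ∩ { q | ∀ a, ∃ b, o(q,a,b) ∈ X }`. -/
def Game.dstep (G : Game) (X : Set G.S) : Set G.S :=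
  G.Tᶜ ∩ { q | ∀ a : G.M q, ∃ b : G.B q a, G.o q a b ∈ X }

/-- The dual iteration: `V 0 = Tᶜ`, `V (γ+1) = dstep (V γ)`, and
`V λ = ⋂_{γ<λ} V γ` for limit `λ`. -/
noncomputable def Game.V (G : Game) (γ : Ordinal.{0}) : Set G.S :=
  Ordinal.limitRecOn γ G.Tᶜ (fun _ X => G.dstep X)
    (fun δ _ ih => ⋂ x : { β : Ordinal.{0} // β < δ }, ih x.1 x.2)

lemma Game.V_zero (G : Game) : G.V 0 = G.Tᶜ :=
  Ordinal.limitRecOn_zero _ _ _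

lemma Game.V_succ (G : Game) (γ : Ordinal.{0}) : G.V (γ + 1) = G.dstep (G.V γ) := by
  rw [Game.V, Ordinal.add_one_eq_succ, Ordinal.limitRecOn_succ]
  rfl

lemma Game.V_limit (G : Game) (γ : Ordinal.{0}) (hγ : Order.IsSuccLimit γ) :
    G.V γ = ⋂ x : { β : Ordinal.{0} // β < γ }, G.V x.1 := by
  rw [Game.V, Ordinal.limitRecOn_limit _ _ _ _ hγ]
  rfl

lemma Game.dstep_mono (G : Game) {X Y : Set G.S} (h : X ⊆ Y) : G.dstep X ⊆ G.dstep Y := by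
  rintro q ⟨hT, hq⟩
  exact ⟨hT, fun a => (hq a).imp fun b hb => h hb⟩

lemma Game.V_nat_anti (G : Game) : ∀ n : ℕ, G.V ((n + 1 : ℕ) : Ordinal.{0}) ⊆ G.V (n : Ordinal.{0}) := by
  intro n
  induction n with
  | zero =>
    have e : ((0 + 1 : ℕ) : Ordinal.{0}) = ((0 : ℕ) : Ordinal.{0}) + 1 := by simp
    rw [e, Game.V_succ]
    rw [Nat.cast_zero, Game.V_zero]
    exact fun q hq => hq.1
  | succ n ih =>
    have e2 : ((n + 1 : ℕ) : Ordinal.{0}) = ((n : ℕ) : Ordinal.{0}) + 1 := by push_cast; rfl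
    have e1 : ((n + 1 + 1 : ℕ) : Ordinal.{0}) = ((n + 1 : ℕ) : Ordinal.{0}) + 1 := by
      push_cast; rfl
    rw [show n + 2 = n + 1 + 1 by rfl, e1, Game.V_succ, e2, Game.V_succ]
    refine G.dstep_mono ?_
    rw [← Game.V_succ, ← e2]
    exact ih

lemma Game.V_nat_anti' (G : Game) {m n : ℕ} (h : m ≤ n) :
    G.V (n : Ordinal.{0}) ⊆ G.V (m : Ordinal.{0}) := by
  induction n with
  | zero => simp_all
  | succ n ih =>
    rcases Nat.lt_or_ge m (n + 1) with h' | h'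
    · exact (G.V_nat_anti n).trans (ih (Nat.lt_succ_iff.mp h'))
    · have : m = n + 1 := le_antisymm h h'
      subst this; exact le_refl _

/-- The key step: a state in `⋂ n, V n` satisfies the defining property of
`dstep (⋂ n, V n)`, using image-finiteness. -/
lemma Game.key (G : Game)
    (hfin : ∀ (q : G.S) (a : G.M q), (Set.range (G.o q a)).Finite)
    (q : G.S) (h : ∀ n : ℕ, q ∈ G.V (n : Ordinal.{0})) :
    q ∉ G.T ∧ ∀ a : G.M q, ∃ b : G.B q a, ∀ n : ℕ, G.o q a b ∈ G.V (n : Ordinal.{0}) := by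
  constructor
  · have := h 0; rw [Nat.cast_zero, Game.V_zero] at this; exact this
  · intro a
    have hstep : ∀ n : ℕ, ∃ b : G.B q a, G.o q a b ∈ G.V (n : Ordinal.{0}) := by
      intro n
      have := h (n + 1)
      rw [show ((n + 1 : ℕ) : Ordinal.{0}) = ((n : ℕ) : Ordinal.{0}) + 1 by push_cast; ring,
        Game.V_succ] at this
      exact this.2 a
    choose b hb using hstep
    haveI : Finite ↥(Set.range (G.o q a)) := (hfin q a).to_subtype
    obtain ⟨s, hs⟩ := Finite.exists_infinite_fiber
      (fun n : ℕ => (⟨G.o q a (b n), Set.mem_range_self _⟩ : ↥(Set.range (G.o q a))))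
    obtain ⟨b', hb'⟩ := s.2
    refine ⟨b', fun m => ?_⟩
    rw [Set.infinite_coe_iff] at hs
    obtain ⟨n, hn, hmn⟩ := hs.exists_gt m
    have hfn : G.o q a (b n) = (s : G.S) := congrArg Subtype.val hn
    have hsV : (s : G.S) ∈ G.V (m : Ordinal.{0}) :=
      G.V_nat_anti' hmn.le (hfn ▸ hb n)
    rwa [hb']

lemma Game.V_all (G : Game)
    (hfin : ∀ (q : G.S) (a : G.M q), (Set.range (G.o q a)).Finite)
    (γ : Ordinal.{0}) :
    ∀ q : G.S, (∀ n : ℕ, q ∈ G.V (n : Ordinal.{0})) → q ∈ G.V γ := by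
  induction γ using Ordinal.limitRecOn with
  | zero =>
    intro q h
    rw [Game.V_zero]
    exact (G.key hfin q h).1
  | add_one γ ih =>
    intro q h
    rw [Game.V_succ]
    obtain ⟨hT, hst⟩ := G.key hfin q h
    refine ⟨hT, fun a => ?_⟩
    obtain ⟨b, hb⟩ := hst a
    exact ⟨b, ih _ hb⟩
  | limit γ hγ ih =>
    intro q h
    rw [Game.V_limit G γ hγ]
    exact Set.mem_iInter.mpr fun x => ih x.1 x.2 q h

/-- König-type lemma for safety: in an image-finite game, if the falsifier can
keep the play outside `T` for `n` steps from `q` for every `n < ω`, then there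
is an infinite play from `q` staying outside `T`, and indeed `q ∈ V γ` for
every ordinal `γ`. -/
theorem koenig_safety (G : Game)
    (hfin : ∀ (q : G.S) (a : G.M q), (Set.range (G.o q a)).Finite)
    (q : G.S) (h : ∀ n : ℕ, q ∈ G.V (n : Ordinal.{0})) :
    (∃ f : ℕ → G.S, f 0 = q ∧
      ∀ k : ℕ, f k ∉ G.T ∧
        ∃ (a : G.M (f k)) (b : G.B (f k) a), f (k + 1) = G.o (f k) a b) ∧
    (∀ γ : Ordinal.{0}, q ∈ G.V γ) := by
  have main : ∀ p : G.S, (∀ n : ℕ, p ∈ G.V (n : Ordinal.{0})) →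
      p ∉ G.T ∧ ∃ (a : G.M p) (b : G.B p a),
        p ∉ G.T ∧ ∀ n : ℕ, G.o p a b ∈ G.V (n : Ordinal.{0}) := by
    intro p hp
    obtain ⟨hT, hst⟩ := G.key hfin p hp
    obtain ⟨b, hb⟩ := hst (Classical.choice (G.M_ne p))
    exact ⟨hT, _, b, hT, hb⟩
  constructor
  · -- build the infinite play by recursion on subtypes
    let X := { p : G.S // ∀ n : ℕ, p ∈ G.V (n : Ordinal.{0}) }
    have next : ∀ p : X, ∃ p' : X, p.1 ∉ G.T ∧
        ∃ (a : G.M p.1) (b : G.B p.1 a), p'.1 = G.o p.1 a b := by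
      rintro ⟨p, hp⟩
      obtain ⟨hT, a, b, _, hb⟩ := main p hp
      exact ⟨⟨G.o p a b, hb⟩, hT, a, b, rfl⟩
    choose nx hnx using next
    let g : ℕ → X := fun k => Nat.rec (⟨q, h⟩ : X) (fun _ p => nx p) k
    refine ⟨fun k => (g k).1, rfl, fun k => ?_⟩
    obtain ⟨hT, a, b, hb⟩ := hnx (g k)
    exact ⟨hT, a, b, hb⟩
  · exact fun γ => G.V_all hfin γ q h
end
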